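/- arXiv:2210.03085 — 2 statements merged into one kernel-verified Lean document; each statement's English description precedes it below -/
import Mathlib

section
/- Let s, t, k be natural numbers with t < k. Then for every real number α_k, every integer l with 1 ≤ l ≤ k − t, and all X ≥ 1, one has ∮ |F(α_k, α^{t−1})|^{2s} dα^{t−1} ≪ X^{i_{l+1} + i_{l+2} + ⋯ + i_{k−t}} · I(α_k; l), with an implicit constant depending only on s and k. -/
/-- `e(z) = e^{2πiz}`. -/
noncomputable def e (z : ℝ) : ℂ := Complex.exp (2 * Real.pi * Complex.I * z)

/-- The unit cube `[0,1)^n`. -/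
def unitCube (n : ℕ) : Set (Fin n → ℝ) := Set.univ.pi fun _ => Set.Ico (0 : ℝ) 1

/-- The exponential sum `F(α_{k_1}, α^{t−1}) = Σ_{1≤x≤X} e(α_{k_1}x^{k_1} + ⋯ + α_{k_t}x^{k_t})`;
here `αk` is the leading coefficient `α_{k_1}` and, for `j : Fin (t-1)`, `α j` is the
coefficient `α_{k_{j+2}}` of `x^{k_{j+2}}`. -/
noncomputable def Fsum (kk : ℕ → ℕ) (t : ℕ) (X : ℝ) (αk : ℝ) (α : Fin (t - 1) → ℝ) : ℂ :=
  ∑ x ∈ Finset.Icc 1 ⌊X⌋₊,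
    e (αk * (x : ℝ) ^ kk 1 + ∑ j : Fin (t - 1), α j * (x : ℝ) ^ kk (j.1 + 2))

/-- The exponential sum `f(α_k, α) = Σ_{1≤x≤X} e(α_k x^k + α_{k−1}x^{k−1} + ⋯ + α_1 x)`;
for `j : Fin (k-1)`, `α j` is the coefficient `α_{j+1}` of `x^{j+1}`. -/
noncomputable def fsum (k : ℕ) (X : ℝ) (αk : ℝ) (α : Fin (k - 1) → ℝ) : ℂ :=
  ∑ x ∈ Finset.Icc 1 ⌊X⌋₊,
    e (αk * (x : ℝ) ^ k + ∑ j : Fin (k - 1), α j * (x : ℝ) ^ (j.1 + 1))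

/-- The `1`-based coordinate `v_m` of a vector `v = (v_1, …, v_n)` (zero outside `1 ≤ m ≤ n`). -/
def coord1 {n : ℕ} (v : Fin n → ℝ) (m : ℕ) : ℝ :=
  if h : 1 ≤ m ∧ m ≤ n then v ⟨m - 1, by omega⟩ else 0

/-- The quantity `I(α_k; l) = Σ_{|g_{i_1}|≤sX^{i_1}} ⋯ Σ_{|g_{i_l}|≤sX^{i_l}}
∮ |f(α_k, α)|^{2s} e(−(α_{i_1}g_{i_1} + ⋯ + α_{i_l}g_{i_l})) dα`; by orthogonality each
summand is a nonnegative real number, so we record its real part. -/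
noncomputable def Isum (s k : ℕ) (ii : ℕ → ℕ) (X : ℝ) (αk : ℝ) (l : ℕ) : ℝ :=
  ∑ g ∈ Fintype.piFinset (fun j : Fin l =>
      Finset.Icc (-(⌊(s : ℝ) * X ^ ii (j.1 + 1)⌋)) ⌊(s : ℝ) * X ^ ii (j.1 + 1)⌋),
    ∫ α in unitCube (k - 1),
      ‖fsum k X αk α‖ ^ (2 * s) *
        (e (-(∑ j : Fin l, coord1 α (ii (j.1 + 1)) * (g j : ℝ)))).re

lemma e_add (a b : ℝ) : e (a + b) = e a * e b := by
  simp [e, Complex.ofReal_add, mul_add, Complex.exp_add]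
lemma e_zero : e 0 = 1 := by simp [e]
lemma conj_e (a : ℝ) : (starRingEnd ℂ) (e a) = e (-a) := by
  rw [e, e, ← Complex.exp_conj]
  congr 1
  simp only [map_mul, Complex.conj_I, Complex.conj_ofReal, map_ofNat]
  push_cast
  ring
lemma abs_e (a : ℝ) : ‖e a‖ = 1 := by
  rw [e, Complex.norm_exp]
  norm_num [Complex.mul_re]
lemma e_sum {ι : Type*} (s : Finset ι) (f : ι → ℝ) : e (∑ i ∈ s, f i) = ∏ i ∈ s, e (f i) := by
  rw [e, Complex.ofReal_sum, Finset.mul_sum, Complex.exp_sum]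
  rfl
lemma e_int (m : ℤ) : e m = 1 := by
  rw [e]
  convert Complex.exp_int_mul_two_pi_mul_I m using 2
  push_cast; ring


open MeasureTheory

lemma continuous_e {X : Type*} [TopologicalSpace X] {f : X → ℝ} (hf : Continuous f) :
    Continuous fun x => e (f x) := by
  unfold e
  fun_prop

lemma volume_unitCube (n : ℕ) : MeasureTheory.volume (unitCube n) = 1 := by
  rw [unitCube, MeasureTheory.volume_pi_pi]
  simp

lemma measurableSet_unitCube (n : ℕ) : MeasurableSet (unitCube n) :=
  MeasurableSet.univ_pi fun _ => measurableSet_Ico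

instance finiteCube (n : ℕ) : IsFiniteMeasure (MeasureTheory.volume.restrict (unitCube n)) := by
  constructor
  rw [Measure.restrict_apply_univ, volume_unitCube]
  exact ENNReal.one_lt_top

lemma integrableOn_unitCube {n : ℕ} {f : (Fin n → ℝ) → ℂ} (hf : Continuous f) (C : ℝ)
    (hC : ∀ x, ‖f x‖ ≤ C) : IntegrableOn f (unitCube n) := by
  refine ⟨hf.aestronglyMeasurable.restrict, ?_⟩
  exact MeasureTheory.HasFiniteIntegral.of_bounded (C := C) (Filter.Eventually.of_forall hC)

lemma integrableOn_unitCube_re {n : ℕ} {f : (Fin n → ℝ) → ℝ} (hf : Continuous f) (C : ℝ)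
    (hC : ∀ x, |f x| ≤ C) : IntegrableOn f (unitCube n) := by
  refine ⟨hf.aestronglyMeasurable.restrict, ?_⟩
  exact MeasureTheory.HasFiniteIntegral.of_bounded (C := C) (Filter.Eventually.of_forall hC)

lemma integral_e_int (m : ℤ) : ∫ t in Set.Ico (0:ℝ) 1, e (t * m) = if m = 0 then 1 else 0 := by
  rcases eq_or_ne m 0 with h | h
  · subst h
    simp [e, Real.volume_Ico]
  · rw [if_neg h, MeasureTheory.integral_Ico_eq_integral_Ioo, ← MeasureTheory.integral_Ioc_eq_integral_Ioo,
        ← intervalIntegral.integral_of_le zero_le_one]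
    have h2 : (2 * (Real.pi:ℂ) * Complex.I * m) ≠ 0 := by
      simp [Real.pi_ne_zero, Complex.I_ne_zero, h]
    have key : ∀ t : ℝ, e (t * m) = Complex.exp ((2 * (Real.pi:ℂ) * Complex.I * m) * t) := by
      intro t; rw [e]; congr 1; push_cast; ring
    simp_rw [key]
    rw [integral_exp_mul_complex h2]
    rw [Complex.ofReal_one, Complex.ofReal_zero, mul_one, mul_zero, Complex.exp_zero]
    have h3 : 2 * (Real.pi:ℂ) * Complex.I * m = (m:ℂ) * (2 * (Real.pi:ℂ) * Complex.I) := by ring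
    rw [h3, Complex.exp_int_mul_two_pi_mul_I]
    simp

lemma integral_cube_prod {n : ℕ} (g : Fin n → ℝ → ℂ) (hg : ∀ j, Continuous (g j)) :
    ∫ α in unitCube n, ∏ j, g j (α j) = ∏ j, ∫ t in Set.Ico (0:ℝ) 1, g j t := by
  rw [← MeasureTheory.integral_indicator (measurableSet_unitCube n)]
  have key : ∀ α : Fin n → ℝ, (unitCube n).indicator (fun α => ∏ j, g j (α j)) α
      = ∏ j, (Set.Ico (0:ℝ) 1).indicator (g j) (α j) := by
    intro α
    by_cases h : α ∈ unitCube n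
    · rw [Set.indicator_of_mem h]
      refine Finset.prod_congr rfl fun j _ => ?_
      rw [Set.indicator_of_mem (h j (Set.mem_univ j))]
    · rw [Set.indicator_of_notMem h]
      obtain ⟨j, hj⟩ : ∃ j, α j ∉ Set.Ico (0:ℝ) 1 := by
        simpa [unitCube, Set.mem_pi] using h
      exact (Finset.prod_eq_zero (Finset.mem_univ j)
        (by rw [Set.indicator_of_notMem hj])).symm
  simp_rw [key]
  rw [MeasureTheory.integral_fintype_prod_volume_eq_prod (ι := Fin n)
    (f := fun j t => (Set.Ico (0:ℝ) 1).indicator (g j) t)]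
  exact Finset.prod_congr rfl fun j _ => MeasureTheory.integral_indicator measurableSet_Ico

lemma integral_cube_e {n : ℕ} (c : ℝ) (m : Fin n → ℤ) :
    ∫ α in unitCube n, e (c + ∑ j, α j * m j)
      = e c * ∏ j, (if m j = 0 then (1:ℂ) else 0) := by
  have key : ∀ α : Fin n → ℝ, e (c + ∑ j, α j * m j) = e c * ∏ j, e (α j * m j) := by
    intro α; rw [e_add, e_sum]
  simp_rw [key]
  rw [MeasureTheory.integral_const_mul]
  congr 1
  rw [integral_cube_prod (g := fun j t => e (t * m j))
    (fun j => continuous_e (by fun_prop))]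
  exact Finset.prod_congr rfl fun j _ => integral_e_int (m j)


open MeasureTheory Finset

/-- integer power sum -/
def σZ {s : ℕ} (x : Fin s → ℕ) (ee : ℕ) : ℤ := ∑ m, (x m : ℤ)^ee

lemma σZ_cast {s : ℕ} (x : Fin s → ℕ) (ee : ℕ) : ((σZ x ee : ℤ) : ℝ) = ∑ m, (x m : ℝ)^ee := by
  push_cast [σZ]; rfl

lemma EXP (s M n kex : ℕ) (αk : ℝ) (ε : Fin n → ℕ) (d : Fin n → ℤ) :
    ∫ α in unitCube n,
      (‖∑ x ∈ Finset.Icc 1 M, e (αk * (x:ℝ)^kex + ∑ j, α j * (x:ℝ)^(ε j))‖)^(2*s)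
        * (e (-(∑ j, α j * (d j : ℝ)))).re
    = ∑ x ∈ Fintype.piFinset (fun _ : Fin s => Finset.Icc 1 M),
        ∑ y ∈ Fintype.piFinset (fun _ : Fin s => Finset.Icc 1 M),
        (e (αk * ((σZ x kex : ℝ) - (σZ y kex : ℝ)))).re
          * ∏ j, (if σZ x (ε j) = σZ y (ε j) + d j then (1:ℝ) else 0) := by
  set P := Fintype.piFinset (fun _ : Fin s => Finset.Icc 1 M) with hP
  set F : (Fin n → ℝ) → ℂ :=
    fun α => ∑ x ∈ Finset.Icc 1 M, e (αk * (x:ℝ)^kex + ∑ j, α j * (x:ℝ)^(ε j)) with hF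
  set A : (Fin s → ℕ) → (Fin n → ℝ) → ℝ :=
    fun x α => αk * ((σZ x kex : ℤ):ℝ) + ∑ j, α j * ((σZ x (ε j) : ℤ):ℝ) with hA
  set md : (Fin s → ℕ) → (Fin s → ℕ) → Fin n → ℤ :=
    fun x y j => σZ x (ε j) - σZ y (ε j) - d j with hmd
  set c : (Fin s → ℕ) → (Fin s → ℕ) → ℝ :=
    fun x y => αk * ((σZ x kex : ℝ) - (σZ y kex : ℝ)) with hc
  -- Step A: pointwise identity
  have hFs : ∀ α, F α ^ s = ∑ x ∈ P, e (A x α) := by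
    intro α
    have h1 : F α ^ s = ∏ _i : Fin s, F α := by
      rw [Finset.prod_const, Finset.card_univ, Fintype.card_fin]
    rw [h1, hF]
    rw [Finset.prod_univ_sum]
    refine Finset.sum_congr rfl fun p _ => ?_
    rw [← e_sum]
    congr 1
    rw [hA]
    simp only [σZ_cast]
    rw [Finset.sum_add_distrib, ← Finset.mul_sum]
    congr 1
    rw [Finset.sum_comm]
    refine Finset.sum_congr rfl fun j _ => ?_
    rw [Finset.mul_sum]
  have hFcs : ∀ α, (starRingEnd ℂ) (F α ^ s) = ∑ y ∈ P, e (-(A y α)) := by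
    intro α
    rw [hFs α, map_sum]
    exact Finset.sum_congr rfl fun y _ => conj_e _
  have hpt : ∀ α, (‖F α‖)^(2*s) * (e (-(∑ j, α j * (d j : ℝ)))).re
      = ∑ x ∈ P, ∑ y ∈ P, (e (c x y + ∑ j, α j * (md x y j : ℝ))).re := by
    intro α
    have habs : (((‖F α‖)^(2*s) : ℝ) : ℂ) = F α ^ s * (starRingEnd ℂ) (F α ^ s) := by
      rw [pow_mul, Complex.ofReal_pow, Complex.sq_norm, ← Complex.mul_conj, mul_pow, ← map_pow]
    have : (‖F α‖)^(2*s) * (e (-(∑ j, α j * (d j : ℝ)))).re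
        = ((((‖F α‖)^(2*s) : ℝ) : ℂ) * e (-(∑ j, α j * (d j : ℝ)))).re := by
      rw [Complex.re_ofReal_mul]
    rw [this, habs, hFcs α, hFs α, Finset.sum_mul_sum]
    rw [← Finset.sum_product', ← Finset.sum_product']
    rw [Finset.sum_mul, Complex.re_sum]
    refine Finset.sum_congr rfl fun p _ => ?_
    congr 1
    rw [mul_assoc, ← e_add, ← e_add]
    congr 1
    simp only [hc, hmd, hA]
    push_cast
    have hsplit : ∑ x : Fin n, α x * (((σZ p.1 (ε x)):ℝ) - ((σZ p.2 (ε x)):ℝ) - ((d x):ℝ))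
        = (∑ x : Fin n, α x * ((σZ p.1 (ε x)):ℝ)) - (∑ x : Fin n, α x * ((σZ p.2 (ε x)):ℝ))
          - ∑ x : Fin n, α x * ((d x):ℝ) := by
      rw [← Finset.sum_sub_distrib, ← Finset.sum_sub_distrib]
      refine Finset.sum_congr rfl fun x _ => by ring
    rw [hsplit]
    ring
  -- Step B: swap integral and sums
  have hint : ∀ (x y : Fin s → ℕ),
      MeasureTheory.IntegrableOn
        (fun α : Fin n → ℝ => (e (c x y + ∑ j, α j * (md x y j : ℝ))).re) (unitCube n) := by
    intro x y
    refine integrableOn_unitCube_re (Complex.continuous_re.comp (continuous_e (by fun_prop))) 1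
      fun α => ?_
    calc |(e (c x y + ∑ j, α j * (md x y j : ℝ))).re|
        ≤ ‖e (c x y + ∑ j, α j * (md x y j : ℝ))‖ := Complex.abs_re_le_norm _
      _ = 1 := abs_e _
  rw [MeasureTheory.setIntegral_congr_fun (by
      exact MeasurableSet.univ_pi fun _ => measurableSet_Ico) (fun α _ => hpt α)]
  rw [MeasureTheory.integral_finset_sum P
    (fun x _ => MeasureTheory.integrable_finset_sum P (fun y _ => hint x y))]
  refine Finset.sum_congr rfl fun x _ => ?_
  rw [MeasureTheory.integral_finset_sum P (fun y _ => hint x y)]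
  refine Finset.sum_congr rfl fun y _ => ?_
  -- Step C: single term
  have hic : MeasureTheory.IntegrableOn
      (fun α : Fin n → ℝ => e (c x y + ∑ j, α j * (md x y j : ℝ))) (unitCube n) := by
    refine integrableOn_unitCube (continuous_e (by fun_prop)) 1 fun α => le_of_eq (abs_e _)
  have := integral_re (μ := MeasureTheory.volume.restrict (unitCube n)) hic
  simp only [RCLike.re_to_complex] at this
  rw [this, integral_cube_e (c x y) (md x y)]
  have hprod : (∏ j, (if md x y j = 0 then (1:ℂ) else 0))
      = (((∏ j, (if σZ x (ε j) = σZ y (ε j) + d j then (1:ℝ) else 0)) : ℝ) : ℂ) := by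
    rw [Complex.ofReal_prod]
    refine Finset.prod_congr rfl fun j _ => ?_
    have hiff : md x y j = 0 ↔ σZ x (ε j) = σZ y (ε j) + d j := by
      simp only [hmd]; omega
    by_cases hj : md x y j = 0
    · rw [if_pos hj, if_pos (hiff.mp hj)]; simp
    · rw [if_neg hj, if_neg (fun hh => hj (hiff.mpr hh))]; simp
  rw [hprod, mul_comm, Complex.re_ofReal_mul]
  ring


lemma LHS_eval (s t : ℕ) (kk : ℕ → ℕ) (X αk : ℝ) :
    ∫ α in unitCube (t-1), (‖Fsum kk t X αk α‖)^(2*s)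
    = ∑ x ∈ Fintype.piFinset (fun _ : Fin s => Finset.Icc 1 ⌊X⌋₊),
        ∑ y ∈ Fintype.piFinset (fun _ : Fin s => Finset.Icc 1 ⌊X⌋₊),
        (e (αk * ((σZ x (kk 1) : ℝ) - (σZ y (kk 1) : ℝ)))).re
          * ∏ j : Fin (t-1), (if σZ x (kk (j.1+2)) = σZ y (kk (j.1+2)) + 0 then (1:ℝ) else 0) := by
  have hcong : ∀ α ∈ unitCube (t-1), (‖Fsum kk t X αk α‖)^(2*s)
      = (‖Fsum kk t X αk α‖)^(2*s)
        * (e (-(∑ j : Fin (t-1), α j * (((0 : Fin (t-1) → ℤ) j : ℤ) : ℝ)))).re := by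
    intro α _
    simp [e_zero]
  rw [setIntegral_congr_fun (measurableSet_unitCube (t-1)) hcong]
  have := EXP s ⌊X⌋₊ (t-1) (kk 1) αk (fun j => kk (j.1+2)) 0
  simp only [Pi.zero_apply] at this ⊢
  simp only [Fsum]
  exact this

lemma Isum_eval (s k : ℕ) (ii : ℕ → ℕ) (X αk : ℝ) (l : ℕ)
    (hii : ∀ m : Fin l, 1 ≤ ii (m.1+1) ∧ ii (m.1+1) ≤ k-1)
    (g : Fin l → ℤ) :
    (∫ α in unitCube (k-1), ‖fsum k X αk α‖ ^ (2 * s) *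
        (e (-(∑ j : Fin l, coord1 α (ii (j.1 + 1)) * (g j : ℝ)))).re)
    = ∑ x ∈ Fintype.piFinset (fun _ : Fin s => Finset.Icc 1 ⌊X⌋₊),
        ∑ y ∈ Fintype.piFinset (fun _ : Fin s => Finset.Icc 1 ⌊X⌋₊),
        (e (αk * ((σZ x k : ℝ) - (σZ y k : ℝ)))).re
          * ∏ j : Fin (k-1), (if σZ x (j.1+1) = σZ y (j.1+1)
              + (∑ m : Fin l, if ii (m.1+1) = j.1+1 then g m else 0) then (1:ℝ) else 0) := by
  set d : Fin (k-1) → ℤ := fun j => ∑ m : Fin l, if ii (m.1+1) = j.1+1 then g m else 0 with hd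
  have hchar : ∀ α : Fin (k-1) → ℝ,
      (∑ j : Fin l, coord1 α (ii (j.1 + 1)) * (g j : ℝ)) = ∑ j : Fin (k-1), α j * (d j : ℝ) := by
    intro α
    rw [hd]
    have : ∀ j : Fin (k-1), α j * ((∑ m : Fin l, if ii (m.1+1) = j.1+1 then g m else 0 : ℤ) : ℝ)
        = ∑ m : Fin l, (if ii (m.1+1) = j.1+1 then α j * (g m : ℝ) else 0) := by
      intro j
      push_cast
      rw [Finset.mul_sum]
      refine Finset.sum_congr rfl fun m _ => ?_
      by_cases h : ii (m.1+1) = j.1+1 <;> simp [h]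
    simp only [this]
    rw [Finset.sum_comm]
    refine Finset.sum_congr rfl fun m _ => ?_
    have h1 := (hii m).1
    have h2 := (hii m).2
    set j₀ : Fin (k-1) := ⟨ii (m.1+1) - 1, by omega⟩ with hj₀
    have hcond : ∀ j : Fin (k-1), (ii (m.1+1) = j.1+1) ↔ j = j₀ := by
      intro j
      constructor
      · intro h; apply Fin.ext; simp [hj₀]; omega
      · intro h; subst h; simp [hj₀]; omega
    calc coord1 α (ii (m.1+1)) * (g m : ℝ)
        = α j₀ * (g m : ℝ) := by
          rw [coord1, dif_pos ⟨h1, h2⟩]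
      _ = ∑ j : Fin (k-1), (if j = j₀ then α j * (g m : ℝ) else 0) := by
          rw [Finset.sum_ite_eq' Finset.univ j₀ (fun j => α j * (g m : ℝ))]
          simp
      _ = ∑ j : Fin (k-1), (if ii (m.1+1) = j.1+1 then α j * (g m : ℝ) else 0) := by
          refine Finset.sum_congr rfl fun j _ => ?_
          rw [if_congr (hcond j) rfl rfl]
  have hcong : ∀ α ∈ unitCube (k-1), ‖fsum k X αk α‖ ^ (2 * s) *
      (e (-(∑ j : Fin l, coord1 α (ii (j.1 + 1)) * (g j : ℝ)))).re
      = ‖fsum k X αk α‖ ^ (2 * s) *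
        (e (-(∑ j : Fin (k-1), α j * (d j : ℝ)))).re := by
    intro α _
    rw [hchar α]
  rw [setIntegral_congr_fun (measurableSet_unitCube (k-1)) hcong]
  exact EXP s ⌊X⌋₊ (k-1) k αk (fun j => j.1+1) d


theorem statement6 (s k : ℕ) :
    ∃ C : ℝ, 0 < C ∧
    ∀ (t : ℕ) (kk ii : ℕ → ℕ)
      (hk1 : kk 1 = k) (ht : 1 ≤ t) (htk : t < k) (hkt : 1 ≤ kk t)
      (hkmono : ∀ a b : ℕ, 1 ≤ a → a < b → b ≤ t → kk b < kk a)
      (himono : ∀ a b : ℕ, 1 ≤ a → a < b → b ≤ k - t → ii b < ii a)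
      (hirange : (Finset.Icc 1 (k - t)).image ii =
        Finset.Icc 1 k \ (Finset.Icc 1 t).image kk)
      (αk : ℝ) (l : ℕ) (hl1 : 1 ≤ l) (hl2 : l ≤ k - t) (X : ℝ) (hX : 1 ≤ X),
      (∫ α in unitCube (t - 1), ‖Fsum kk t X αk α‖ ^ (2 * s)) ≤
        C * X ^ (∑ j ∈ Finset.Icc (l + 1) (k - t), ii j) * Isum s k ii X αk l := by
  refine ⟨(2*(s:ℝ)+1)^k, by positivity, ?_⟩
  intro t kk ii hk1 ht htk hkt hkmono himono hirange αk l hl1 hl2 X hX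
  have hX0 : (0:ℝ) ≤ X := by linarith
  set M := ⌊X⌋₊ with hM
  have hM1 : 1 ≤ M := Nat.le_floor (by exact_mod_cast hX)
  have hMX : (M:ℝ) ≤ X := Nat.floor_le hX0
  have hk2 : 2 ≤ k := by omega
  set P := Fintype.piFinset (fun _ : Fin s => Finset.Icc 1 M) with hP
  have hkmem : k ∈ (Finset.Icc 1 t).image kk :=
    Finset.mem_image.mpr ⟨1, Finset.mem_Icc.mpr ⟨le_refl 1, ht⟩, hk1⟩
  have hiiA : ∀ a, 1 ≤ a → a ≤ k-t →
      (1 ≤ ii a ∧ ii a ≤ k-1 ∧ ii a ∉ (Finset.Icc 1 t).image kk) := by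
    intro a h1 h2
    have hmem : ii a ∈ (Finset.Icc 1 (k-t)).image ii :=
      Finset.mem_image_of_mem _ (Finset.mem_Icc.mpr ⟨h1, h2⟩)
    rw [hirange] at hmem
    obtain ⟨hin, hnot⟩ := Finset.mem_sdiff.mp hmem
    obtain ⟨ha1, ha2⟩ := Finset.mem_Icc.mp hin
    have hne : ii a ≠ k := fun h => hnot (h ▸ hkmem)
    exact ⟨ha1, by omega, hnot⟩
  have hiinj : ∀ a b, 1 ≤ a → a ≤ k-t → 1 ≤ b → b ≤ k-t → ii a = ii b → a = b := by
    intro a b ha1 ha2 hb1 hb2 hab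
    rcases lt_trichotomy a b with h | h | h
    · have := himono a b ha1 h hb2; omega
    · exact h
    · have := himono b a hb1 h ha2; omega
  have hkkrange : ∀ a, 2 ≤ a → a ≤ t → 1 ≤ kk a ∧ kk a ≤ k-1 := by
    intro a h2 hat
    have hup := hkmono 1 a le_rfl (by omega) hat
    have hlow : 1 ≤ kk a := by
      rcases eq_or_lt_of_le hat with h | h
      · rw [h]; exact hkt
      · have := hkmono a t (by omega) h le_rfl; omega
    omega
  have hkkinj : ∀ a b, 1 ≤ a → a ≤ t → 1 ≤ b → b ≤ t → kk a = kk b → a = b := by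
    intro a b ha1 ha2 hb1 hb2 hab
    rcases lt_trichotomy a b with h | h | h
    · have := hkmono a b ha1 h hb2; omega
    · exact h
    · have := hkmono b a hb1 h ha2; omega
  have hσ : ∀ x ∈ P, ∀ ee : ℕ, 0 ≤ σZ x ee ∧ σZ x ee ≤ (s:ℤ) * (M:ℤ)^ee := by
    intro x hx ee
    have hxm : ∀ m, 1 ≤ x m ∧ x m ≤ M := fun m =>
      Finset.mem_Icc.mp ((Fintype.mem_piFinset.mp hx) m)
    constructor
    · exact Finset.sum_nonneg fun m _ => pow_nonneg (by exact_mod_cast Nat.zero_le _) _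
    · calc σZ x ee ≤ ∑ _m : Fin s, (M:ℤ)^ee := by
            refine Finset.sum_le_sum fun m _ => ?_
            exact pow_le_pow_left₀ (by exact_mod_cast Nat.zero_le _)
              (by exact_mod_cast (hxm m).2) ee
        _ = (s:ℤ) * (M:ℤ)^ee := by
            rw [Finset.sum_const, Finset.card_univ, Fintype.card_fin, nsmul_eq_mul]
  -- named finsets
  set iiL : Finset ℕ := (Finset.Icc 1 l).image ii with hiiLdef
  set iiG : Finset ℕ := (Finset.Icc (l+1) (k-t)).image ii with hiiGdef
  set W : (Fin s → ℕ) → (Fin s → ℕ) → ℝ :=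
    fun x y => (e (αk * ((σZ x k : ℝ) - (σZ y k : ℝ)))).re with hWdef
  set T : (Fin (k-1) → ℤ) → ℝ := fun h => ∑ x ∈ P, ∑ y ∈ P, W x y *
      ∏ j : Fin (k-1), (if j.1+1 ∈ iiL then (1:ℝ)
        else if σZ x (j.1+1) = σZ y (j.1+1) + h j then 1 else 0) with hTdef
  set Hj : Fin (k-1) → Finset ℤ := fun j =>
    if j.1+1 ∈ iiG then Finset.Icc (-((s:ℤ)*(M:ℤ)^(j.1+1))) ((s:ℤ)*(M:ℤ)^(j.1+1))
    else {(0:ℤ)} with hHjdef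
  have hsumbox : ∀ (B : Finset ℤ) (a b : ℤ), a - b ∈ B →
      (∑ v ∈ B, if a = b + v then (1:ℝ) else 0) = 1 := by
    intro B a b hmem
    have hcg : ∀ v ∈ B, (if a = b + v then (1:ℝ) else 0) = if v = a - b then (1:ℝ) else 0 :=
      fun v _ => if_congr (by omega) rfl rfl
    rw [Finset.sum_congr rfl hcg, Finset.sum_ite_eq' B (a-b) (fun _ => (1:ℝ)), if_pos hmem]
  have hiiAiff : ∀ mm : ℕ, mm ∈ (Finset.Icc 1 (k-t)).image ii ↔ (mm ∈ iiL ∨ mm ∈ iiG) := by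
    intro mm
    rw [hiiLdef, hiiGdef]
    constructor
    · intro h
      obtain ⟨a, ha, rfl⟩ := Finset.mem_image.mp h
      obtain ⟨ha1, ha2⟩ := Finset.mem_Icc.mp ha
      rcases le_or_gt a l with h' | h'
      · exact Or.inl (Finset.mem_image_of_mem _ (Finset.mem_Icc.mpr ⟨ha1, h'⟩))
      · exact Or.inr (Finset.mem_image_of_mem _ (Finset.mem_Icc.mpr ⟨h', ha2⟩))
    · intro h
      rcases h with h | h
      · obtain ⟨a, ha, rfl⟩ := Finset.mem_image.mp h
        obtain ⟨ha1, ha2⟩ := Finset.mem_Icc.mp ha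
        exact Finset.mem_image_of_mem _ (Finset.mem_Icc.mpr ⟨ha1, by omega⟩)
      · obtain ⟨a, ha, rfl⟩ := Finset.mem_image.mp h
        obtain ⟨ha1, ha2⟩ := Finset.mem_Icc.mp ha
        exact Finset.mem_image_of_mem _ (Finset.mem_Icc.mpr ⟨by omega, ha2⟩)
  have hdisj : ∀ mm : ℕ, mm ∈ iiL → mm ∈ iiG → False := by
    intro mm h1 h2
    rw [hiiLdef] at h1
    rw [hiiGdef] at h2
    obtain ⟨a, ha, hae⟩ := Finset.mem_image.mp h1
    obtain ⟨b, hb, hbe⟩ := Finset.mem_image.mp h2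
    obtain ⟨ha1, ha2⟩ := Finset.mem_Icc.mp ha
    obtain ⟨hb1, hb2⟩ := Finset.mem_Icc.mp hb
    have := hiinj a b ha1 (by omega) (by omega) hb2 (hae.trans hbe.symm)
    omega
  have claimA : (∫ α in unitCube (t - 1), ‖Fsum kk t X αk α‖ ^ (2 * s))
      = ∑ h ∈ Fintype.piFinset Hj, T h := by
    have hswap : ∑ h ∈ Fintype.piFinset Hj, T h = ∑ x ∈ P, ∑ y ∈ P, W x y *
        ∑ h ∈ Fintype.piFinset Hj, ∏ j : Fin (k-1), (if j.1+1 ∈ iiL then (1:ℝ)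
          else if σZ x (j.1+1) = σZ y (j.1+1) + h j then 1 else 0) := by
      rw [hTdef]
      simp only
      rw [Finset.sum_comm]
      refine Finset.sum_congr rfl fun x _ => ?_
      rw [Finset.sum_comm]
      refine Finset.sum_congr rfl fun y _ => ?_
      rw [← Finset.mul_sum]
    rw [LHS_eval s t kk X αk, hk1, hswap]
    refine Finset.sum_congr rfl fun x hx => ?_
    refine Finset.sum_congr rfl fun y hy => ?_
    congr 1
    rw [← Finset.prod_univ_sum Hj (fun j v => if j.1+1 ∈ iiL then (1:ℝ)
      else if σZ x (j.1+1) = σZ y (j.1+1) + v then 1 else 0)]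
    have hfac : ∀ j : Fin (k-1), (∑ v ∈ Hj j, (if j.1+1 ∈ iiL then (1:ℝ)
        else if σZ x (j.1+1) = σZ y (j.1+1) + v then 1 else 0))
        = if j.1+1 ∈ (Finset.Icc 1 (k-t)).image ii then 1
          else (if σZ x (j.1+1) = σZ y (j.1+1) + 0 then (1:ℝ) else 0) := by
      intro j
      by_cases hL : j.1+1 ∈ iiL
      · have hG : j.1+1 ∉ iiG := fun h => hdisj _ hL h
        rw [hHjdef]
        simp only [if_pos hL, if_neg hG]
        rw [Finset.sum_const, Finset.card_singleton, one_smul,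
          if_pos ((hiiAiff _).mpr (Or.inl hL))]
      · by_cases hG : j.1+1 ∈ iiG
        · rw [hHjdef]
          simp only [if_neg hL, if_pos hG]
          rw [if_pos ((hiiAiff _).mpr (Or.inr hG))]
          refine hsumbox _ _ _ ?_
          have h1 := hσ x hx (j.1+1)
          have h2 := hσ y hy (j.1+1)
          rw [Finset.mem_Icc]
          omega
        · have hA : j.1+1 ∉ (Finset.Icc 1 (k-t)).image ii := by
            intro h
            rcases (hiiAiff _).mp h with h' | h'
            exacts [hL h', hG h']
          rw [hHjdef]
          simp only [if_neg hL, if_neg hG, if_neg hA]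
          rw [Finset.sum_singleton]
    rw [Finset.prod_congr rfl (fun j _ => hfac j)]
    -- reindex: product over Fin (t-1) equals filtered product over Fin (k-1)
    have hflip : ∀ j : Fin (k-1), (if j.1+1 ∈ (Finset.Icc 1 (k-t)).image ii then (1:ℝ)
        else (if σZ x (j.1+1) = σZ y (j.1+1) + 0 then (1:ℝ) else 0))
        = if j.1+1 ∉ (Finset.Icc 1 (k-t)).image ii
            then (if σZ x (j.1+1) = σZ y (j.1+1) + 0 then (1:ℝ) else 0) else 1 := by
      intro j
      by_cases hj : j.1+1 ∈ (Finset.Icc 1 (k-t)).image ii <;> simp [hj]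
    rw [Finset.prod_congr rfl (fun j _ => hflip j), ← Finset.prod_filter]
    refine Finset.prod_bij (i := fun (m : Fin (t-1)) (_ : m ∈ Finset.univ) =>
      (⟨kk (m.1+2) - 1, by
        have := hkkrange (m.1+2) (by omega) (by have := m.isLt; omega)
        omega⟩ : Fin (k-1))) ?_ ?_ ?_ ?_
    · intro m _
      have hbd := hkkrange (m.1+2) (by omega) (by have := m.isLt; omega)
      rw [Finset.mem_filter]
      refine ⟨Finset.mem_univ _, ?_⟩
      have heq : kk (m.1+2) - 1 + 1 = kk (m.1+2) := by omega
      simp only [heq]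
      intro hcon
      rw [hirange] at hcon
      exact (Finset.mem_sdiff.mp hcon).2
        (Finset.mem_image.mpr ⟨m.1+2, Finset.mem_Icc.mpr ⟨by omega, by have := m.isLt; omega⟩, rfl⟩)
    · intro m₁ _ m₂ _ hmm
      have hb1 := hkkrange (m₁.1+2) (by omega) (by have := m₁.isLt; omega)
      have hb2 := hkkrange (m₂.1+2) (by omega) (by have := m₂.isLt; omega)
      have hvv : kk (m₁.1+2) - 1 = kk (m₂.1+2) - 1 := congrArg Fin.val hmm
      have := hkkinj (m₁.1+2) (m₂.1+2) (by omega) (by have := m₁.isLt; omega)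
        (by omega) (by have := m₂.isLt; omega) (by omega)
      exact Fin.ext (by omega)
    · intro j hj
      rw [Finset.mem_filter] at hj
      have hjk : j.1+1 ∈ Finset.Icc 1 k := Finset.mem_Icc.mpr ⟨by omega, by have := j.isLt; omega⟩
      have himg : j.1+1 ∈ (Finset.Icc 1 t).image kk := by
        by_contra hcon
        exact hj.2 (by rw [hirange]; exact Finset.mem_sdiff.mpr ⟨hjk, hcon⟩)
      obtain ⟨a, haIcc, hkka⟩ := Finset.mem_image.mp himg
      obtain ⟨ha1, ha2⟩ := Finset.mem_Icc.mp haIcc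
      have ha2' : 2 ≤ a := by
        by_contra hcc
        have ha1' : a = 1 := by omega
        rw [ha1', hk1] at hkka
        have := j.isLt
        omega
      refine ⟨⟨a-2, by omega⟩, Finset.mem_univ _, ?_⟩
      apply Fin.ext
      simp only
      have : a - 2 + 2 = a := by omega
      rw [this, hkka]
      omega
    · intro m _
      have hbd := hkkrange (m.1+2) (by omega) (by have := m.isLt; omega)
      have heq : kk (m.1+2) - 1 + 1 = kk (m.1+2) := by omega
      simp only [heq]
  have claimB : Isum s k ii X αk l = T 0 := by
    have hii' : ∀ m : Fin l, 1 ≤ ii (m.1+1) ∧ ii (m.1+1) ≤ k-1 := by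
      intro m
      have := hiiA (m.1+1) (by omega) (by have := m.isLt; omega)
      exact ⟨this.1, this.2.1⟩
    set jm : Fin l → Fin (k-1) := fun m => ⟨ii (m.1+1) - 1, by
      have := hii' m; omega⟩ with hjmdef
    have hjm1 : ∀ m, (jm m).1 + 1 = ii (m.1+1) := by
      intro m
      have := hii' m
      simp only [hjmdef]
      omega
    have hjminj : Function.Injective jm := by
      intro m₁ m₂ hmm
      have h1 := hii' m₁
      have h2 := hii' m₂
      have hvv : ii (m₁.1+1) - 1 = ii (m₂.1+1) - 1 := congrArg Fin.val hmm
      have := hiinj (m₁.1+1) (m₂.1+1) (by omega) (by have := m₁.isLt; omega)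
        (by omega) (by have := m₂.isLt; omega) (by omega)
      exact Fin.ext (by omega)
    have himg : ∀ j : Fin (k-1), j ∈ Finset.image jm Finset.univ ↔ j.1+1 ∈ iiL := by
      intro j
      constructor
      · intro h
        obtain ⟨m, _, rfl⟩ := Finset.mem_image.mp h
        rw [hjm1 m, hiiLdef]
        exact Finset.mem_image_of_mem _ (Finset.mem_Icc.mpr ⟨by omega, by have := m.isLt; omega⟩)
      · intro h
        rw [hiiLdef] at h
        obtain ⟨a, ha, hae⟩ := Finset.mem_image.mp h
        obtain ⟨ha1, ha2⟩ := Finset.mem_Icc.mp ha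
        refine Finset.mem_image.mpr ⟨⟨a-1, by omega⟩, Finset.mem_univ _, ?_⟩
        apply Fin.ext
        simp only [hjmdef]
        have : a - 1 + 1 = a := by omega
        rw [this, hae]
        omega
    have hfloor : ∀ ee : ℕ, ((s:ℤ)*(M:ℤ)^ee : ℤ) ≤ ⌊(s : ℝ) * X ^ ee⌋ := by
      intro ee
      rw [Int.le_floor]
      push_cast
      exact mul_le_mul_of_nonneg_left (pow_le_pow_left₀ (by positivity) hMX ee)
        (Nat.cast_nonneg s)
    rw [Isum]
    have heval : ∀ g ∈ Fintype.piFinset (fun j : Fin l =>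
        Finset.Icc (-(⌊(s : ℝ) * X ^ ii (j.1 + 1)⌋)) ⌊(s : ℝ) * X ^ ii (j.1 + 1)⌋),
        (∫ α in unitCube (k - 1), ‖fsum k X αk α‖ ^ (2 * s) *
          (e (-(∑ j : Fin l, coord1 α (ii (j.1 + 1)) * (g j : ℝ)))).re)
        = ∑ x ∈ P, ∑ y ∈ P, W x y
          * ∏ j : Fin (k-1), (if σZ x (j.1+1) = σZ y (j.1+1)
              + (∑ m : Fin l, if ii (m.1+1) = j.1+1 then g m else 0) then (1:ℝ) else 0) :=
      fun g _ => Isum_eval s k ii X αk l hii' g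
    rw [Finset.sum_congr rfl heval]
    rw [Finset.sum_comm]
    have hT0eq : T 0 = ∑ x ∈ P, ∑ y ∈ P, W x y *
        ∏ j : Fin (k-1), (if j.1+1 ∈ iiL then (1:ℝ)
          else if σZ x (j.1+1) = σZ y (j.1+1) + 0 then 1 else 0) := by
      rw [hTdef]
      simp only [Pi.zero_apply]
    rw [hT0eq]
    refine Finset.sum_congr rfl fun x hx => ?_
    rw [Finset.sum_comm]
    refine Finset.sum_congr rfl fun y hy => ?_
    rw [← Finset.mul_sum]
    congr 1
    -- key inner identity
    have hdg0 : ∀ j : Fin (k-1), j.1+1 ∉ iiL → ∀ g : Fin l → ℤ,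
        (∑ m : Fin l, if ii (m.1+1) = j.1+1 then g m else 0) = 0 := by
      intro j hj g
      refine Finset.sum_eq_zero fun m _ => ?_
      rw [if_neg]
      intro hcon
      apply hj
      rw [hiiLdef, ← hcon]
      exact Finset.mem_image_of_mem _ (Finset.mem_Icc.mpr ⟨by omega, by have := m.isLt; omega⟩)
    have hdgm : ∀ (m : Fin l) (g : Fin l → ℤ),
        (∑ m' : Fin l, if ii (m'.1+1) = (jm m).1+1 then g m' else 0) = g m := by
      intro m g
      have hcg : ∀ m' : Fin l, m' ∈ Finset.univ →
          (if ii (m'.1+1) = (jm m).1+1 then g m' else 0) = if m' = m then g m' else 0 := by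
        intro m' _
        refine if_congr ?_ rfl rfl
        rw [hjm1 m]
        constructor
        · intro hcon
          exact hiinj (m'.1+1) (m.1+1) (by omega) (by have := m'.isLt; omega)
            (by omega) (by have := m.isLt; omega) hcon |> fun h => Fin.ext (by omega)
        · intro h; rw [h]
      rw [Finset.sum_congr rfl hcg, Finset.sum_ite_eq' Finset.univ m g, if_pos (Finset.mem_univ m)]
    calc ∑ g ∈ Fintype.piFinset (fun j : Fin l =>
          Finset.Icc (-(⌊(s : ℝ) * X ^ ii (j.1 + 1)⌋)) ⌊(s : ℝ) * X ^ ii (j.1 + 1)⌋),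
          ∏ j : Fin (k-1), (if σZ x (j.1+1) = σZ y (j.1+1)
              + (∑ m : Fin l, if ii (m.1+1) = j.1+1 then g m else 0) then (1:ℝ) else 0)
        = ∑ g ∈ Fintype.piFinset (fun j : Fin l =>
          Finset.Icc (-(⌊(s : ℝ) * X ^ ii (j.1 + 1)⌋)) ⌊(s : ℝ) * X ^ ii (j.1 + 1)⌋),
          ((∏ m : Fin l, (if σZ x (ii (m.1+1)) = σZ y (ii (m.1+1)) + g m then (1:ℝ) else 0))
            * ∏ j ∈ (Finset.image jm Finset.univ)ᶜ,
              (if σZ x (j.1+1) = σZ y (j.1+1) + 0 then (1:ℝ) else 0)) := by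
          refine Finset.sum_congr rfl fun g _ => ?_
          rw [← Finset.prod_mul_prod_compl (Finset.image jm Finset.univ)
            (fun j => if σZ x (j.1+1) = σZ y (j.1+1)
              + (∑ m : Fin l, if ii (m.1+1) = j.1+1 then g m else 0) then (1:ℝ) else 0)]
          congr 1
          · rw [Finset.prod_image (fun m₁ _ m₂ _ h => hjminj h)]
            refine Finset.prod_congr rfl fun m _ => ?_
            rw [hdgm m g, hjm1 m]
          · refine Finset.prod_congr rfl fun j hj => ?_
            have hjn : j.1+1 ∉ iiL := fun h => (Finset.mem_compl.mp hj) ((himg j).mpr h)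
            rw [hdg0 j hjn g]
      _ = (∑ g ∈ Fintype.piFinset (fun j : Fin l =>
          Finset.Icc (-(⌊(s : ℝ) * X ^ ii (j.1 + 1)⌋)) ⌊(s : ℝ) * X ^ ii (j.1 + 1)⌋),
          ∏ m : Fin l, (if σZ x (ii (m.1+1)) = σZ y (ii (m.1+1)) + g m then (1:ℝ) else 0))
            * ∏ j ∈ (Finset.image jm Finset.univ)ᶜ,
              (if σZ x (j.1+1) = σZ y (j.1+1) + 0 then (1:ℝ) else 0) := by
          rw [← Finset.sum_mul]
      _ = ∏ j : Fin (k-1), (if j.1+1 ∈ iiL then (1:ℝ)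
            else if σZ x (j.1+1) = σZ y (j.1+1) + 0 then 1 else 0) := by
          have hg1 : (∑ g ∈ Fintype.piFinset (fun j : Fin l =>
              Finset.Icc (-(⌊(s : ℝ) * X ^ ii (j.1 + 1)⌋)) ⌊(s : ℝ) * X ^ ii (j.1 + 1)⌋),
              ∏ m : Fin l, (if σZ x (ii (m.1+1)) = σZ y (ii (m.1+1)) + g m then (1:ℝ) else 0)) = 1 := by
            rw [← Finset.prod_univ_sum (fun j : Fin l =>
              Finset.Icc (-(⌊(s : ℝ) * X ^ ii (j.1 + 1)⌋)) ⌊(s : ℝ) * X ^ ii (j.1 + 1)⌋)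
              (fun m v => if σZ x (ii (m.1+1)) = σZ y (ii (m.1+1)) + v then (1:ℝ) else 0)]
            refine Finset.prod_eq_one fun m _ => ?_
            refine hsumbox _ _ _ ?_
            have h1 := hσ x hx (ii (m.1+1))
            have h2 := hσ y hy (ii (m.1+1))
            have h3 := hfloor (ii (m.1+1))
            rw [Finset.mem_Icc]
            omega
          rw [hg1, one_mul]
          rw [← Finset.prod_mul_prod_compl (Finset.image jm Finset.univ)
            (fun j => if j.1+1 ∈ iiL then (1:ℝ)
              else if σZ x (j.1+1) = σZ y (j.1+1) + 0 then 1 else 0)]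
          have himgone : (∏ j ∈ Finset.image jm Finset.univ,
              (if j.1+1 ∈ iiL then (1:ℝ)
                else if σZ x (j.1+1) = σZ y (j.1+1) + 0 then 1 else 0)) = 1 := by
            refine Finset.prod_eq_one fun j hj => ?_
            rw [if_pos ((himg j).mp hj)]
          rw [himgone, one_mul]
          refine Finset.prod_congr rfl fun j hj => ?_
          have hjn : j.1+1 ∉ iiL := fun h => (Finset.mem_compl.mp hj) ((himg j).mpr h)
          rw [if_neg hjn]
  have claimC : ∀ h : Fin (k-1) → ℤ, |T h| ≤ T 0 := by
    set ε₀ : Fin (k-1) → ℕ := fun j => if j.1+1 ∈ iiL then 0 else j.1+1 with hε₀def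
    set d' : (Fin (k-1) → ℤ) → Fin (k-1) → ℤ :=
      fun hh j => if j.1+1 ∈ iiL then 0 else hh j with hd'def
    have hσ0 : ∀ x : Fin s → ℕ, σZ x 0 = (s:ℤ) := by
      intro x; simp [σZ]
    have hTsum : ∀ hh, T hh = ∑ x ∈ P, ∑ y ∈ P, W x y * ∏ j : Fin (k-1),
        (if σZ x (ε₀ j) = σZ y (ε₀ j) + (d' hh j) then (1:ℝ) else 0) := by
      intro hh
      rw [hTdef]
      refine Finset.sum_congr rfl fun x _ => Finset.sum_congr rfl fun y _ => ?_
      congr 1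
      refine Finset.prod_congr rfl fun j _ => ?_
      by_cases hj : j.1+1 ∈ iiL
      · rw [if_pos hj]
        rw [hε₀def, hd'def]
        simp only [if_pos hj]
        rw [if_pos (by rw [hσ0 x, hσ0 y, add_zero])]
      · rw [if_neg hj, hε₀def, hd'def]
        simp only [if_neg hj]
    have hTint : ∀ hh, T hh = ∫ α in unitCube (k-1),
        (‖∑ x ∈ Finset.Icc 1 M,
          e (αk * (x:ℝ)^k + ∑ j, α j * (x:ℝ)^(ε₀ j))‖)^(2*s)
          * (e (-(∑ j, α j * (d' hh j : ℝ)))).re := by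
      intro hh
      rw [hTsum hh, ← EXP s M (k-1) k αk ε₀ (d' hh)]
    intro hh
    rw [hTint hh, hTint 0]
    set G : (Fin (k-1) → ℝ) → ℂ := fun α => ∑ x ∈ Finset.Icc 1 M,
      e (αk * (x:ℝ)^k + ∑ j, α j * (x:ℝ)^(ε₀ j)) with hGdef
    have hGcont : Continuous G := by
      rw [hGdef]
      exact continuous_finset_sum _ fun x _ => continuous_e (by fun_prop)
    have hGabs : ∀ α, ‖G α‖ ≤ (M:ℝ) := by
      intro α
      rw [hGdef]
      calc ‖∑ x ∈ Finset.Icc 1 M, e (αk * (x:ℝ)^k + ∑ j, α j * (x:ℝ)^(ε₀ j))‖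
          ≤ ∑ x ∈ Finset.Icc 1 M, ‖e (αk * (x:ℝ)^k + ∑ j, α j * (x:ℝ)^(ε₀ j))‖ := by
            exact norm_sum_le _ _
        _ = ∑ x ∈ Finset.Icc 1 M, 1 := Finset.sum_congr rfl fun x _ => abs_e _
        _ = (M:ℝ) := by rw [Finset.sum_const, Nat.card_Icc]; simp
    have hQcont : Continuous fun α : Fin (k-1) → ℝ => (‖G α‖)^(2*s) :=
      (continuous_norm.comp hGcont).pow _
    have hQnonneg : ∀ α : Fin (k-1) → ℝ, 0 ≤ (‖G α‖)^(2*s) :=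
      fun α => pow_nonneg (norm_nonneg _) _
    have hQbound : ∀ α : Fin (k-1) → ℝ, (‖G α‖)^(2*s) ≤ (M:ℝ)^(2*s) :=
      fun α => pow_le_pow_left₀ (norm_nonneg _) (hGabs α) _
    have hMnn : (0:ℝ) ≤ (M:ℝ)^(2*s) := by positivity
    have hrcont : ∀ dd : Fin (k-1) → ℤ,
        Continuous fun α : Fin (k-1) → ℝ => (e (-(∑ j, α j * (dd j : ℝ)))).re :=
      fun dd => Complex.continuous_re.comp (continuous_e (by fun_prop))
    have hrbound : ∀ (dd : Fin (k-1) → ℤ) (α : Fin (k-1) → ℝ),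
        |(e (-(∑ j, α j * (dd j : ℝ)))).re| ≤ 1 := by
      intro dd α
      calc |(e (-(∑ j, α j * (dd j : ℝ)))).re| ≤ ‖e (-(∑ j, α j * (dd j : ℝ)))‖ :=
            Complex.abs_re_le_norm _
        _ = 1 := abs_e _
    have hint1 : MeasureTheory.IntegrableOn (fun α : Fin (k-1) → ℝ =>
        (‖G α‖)^(2*s) * (e (-(∑ j, α j * (d' hh j : ℝ)))).re) (unitCube (k-1)) := by
      refine integrableOn_unitCube_re (hQcont.mul (hrcont (d' hh))) ((M:ℝ)^(2*s)) fun α => ?_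
      rw [abs_mul]
      calc |(‖G α‖)^(2*s)| * |(e (-(∑ j, α j * (d' hh j : ℝ)))).re|
          ≤ (M:ℝ)^(2*s) * 1 := by
            refine mul_le_mul ?_ (hrbound _ α) (abs_nonneg _) hMnn
            rw [abs_of_nonneg (hQnonneg α)]; exact hQbound α
        _ = (M:ℝ)^(2*s) := mul_one _
    have hint2 : MeasureTheory.IntegrableOn (fun α : Fin (k-1) → ℝ =>
        (‖G α‖)^(2*s) * (e (-(∑ j, α j * (d' 0 j : ℝ)))).re) (unitCube (k-1)) := by
      refine integrableOn_unitCube_re (hQcont.mul (hrcont (d' 0))) ((M:ℝ)^(2*s)) fun α => ?_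
      rw [abs_mul]
      calc |(‖G α‖)^(2*s)| * |(e (-(∑ j, α j * (d' 0 j : ℝ)))).re|
          ≤ (M:ℝ)^(2*s) * 1 := by
            refine mul_le_mul ?_ (hrbound _ α) (abs_nonneg _) hMnn
            rw [abs_of_nonneg (hQnonneg α)]; exact hQbound α
        _ = (M:ℝ)^(2*s) := mul_one _
    calc |∫ α in unitCube (k-1),
          (‖G α‖)^(2*s) * (e (-(∑ j, α j * (d' hh j : ℝ)))).re|
        ≤ ∫ α in unitCube (k-1),
          ‖(‖G α‖)^(2*s) * (e (-(∑ j, α j * (d' hh j : ℝ)))).re‖ := by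
          rw [← Real.norm_eq_abs]
          exact MeasureTheory.norm_integral_le_integral_norm _
      _ ≤ ∫ α in unitCube (k-1),
          (‖G α‖)^(2*s) * (e (-(∑ j, α j * (d' 0 j : ℝ)))).re := by
          refine MeasureTheory.integral_mono hint1.norm hint2 fun α => ?_
          have h0 : ∀ j : Fin (k-1), ((d' 0 j : ℤ) : ℝ) = 0 := by
            intro j
            rw [hd'def]
            by_cases hj : j.1+1 ∈ iiL <;> simp [hj]
          have hre1 : (e (-(∑ j, α j * (d' 0 j : ℝ)))).re = 1 := by
            simp only [h0, mul_zero, Finset.sum_const_zero, neg_zero, e_zero, Complex.one_re]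
          rw [hre1, mul_one, Real.norm_eq_abs, abs_mul, abs_of_nonneg (hQnonneg α)]
          calc (‖G α‖)^(2*s) * |(e (-(∑ j, α j * (d' hh j : ℝ)))).re|
              ≤ (‖G α‖)^(2*s) * 1 :=
                mul_le_mul_of_nonneg_left (hrbound _ α) (hQnonneg α)
            _ = (‖G α‖)^(2*s) := mul_one _
  have claimD : ((Fintype.piFinset Hj).card : ℝ)
      ≤ (2*(s:ℝ)+1)^k * X ^ (∑ j ∈ Finset.Icc (l + 1) (k - t), ii j) := by
    rw [Fintype.card_piFinset, Nat.cast_prod]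
    have hcard : ∀ j : Fin (k-1), (((Hj j).card : ℕ) : ℝ)
        = if j.1+1 ∈ iiG then 2*(s:ℝ)*(M:ℝ)^(j.1+1)+1 else 1 := by
      intro j
      rw [hHjdef]
      by_cases hj : j.1+1 ∈ iiG
      · simp only [if_pos hj]
        have hc : ((s:ℤ)*(M:ℤ)^(j.1+1)) = ((s*M^(j.1+1) : ℕ) : ℤ) := by push_cast; ring
        rw [hc, Int.card_Icc]
        have hnat : ((((s*M^(j.1+1) : ℕ) : ℤ)) + 1 - -(((s*M^(j.1+1) : ℕ) : ℤ))).toNat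
            = 2*(s*M^(j.1+1)) + 1 := by omega
        rw [hnat]
        push_cast
        ring
      · simp only [if_neg hj]
        rw [Finset.card_singleton]
        norm_num
    rw [Finset.prod_congr rfl (fun j _ => hcard j)]
    have hs0 : (0:ℝ) ≤ (s:ℝ) := Nat.cast_nonneg s
    have hXpow : ∀ ee : ℕ, (1:ℝ) ≤ X ^ ee := fun ee => one_le_pow₀ hX
    have hMpow : ∀ ee : ℕ, ((M:ℝ))^ee ≤ X^ee :=
      fun ee => pow_le_pow_left₀ (by positivity) hMX ee
    calc ∏ j : Fin (k-1), (if j.1+1 ∈ iiG then 2*(s:ℝ)*(M:ℝ)^(j.1+1)+1 else 1)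
        ≤ ∏ j : Fin (k-1), (if j.1+1 ∈ iiG then (2*(s:ℝ)+1) * X^(j.1+1) else 1) := by
          refine Finset.prod_le_prod (fun j _ => ?_) (fun j _ => ?_)
          · by_cases hj : j.1+1 ∈ iiG
            · rw [if_pos hj]; positivity
            · rw [if_neg hj]; norm_num
          · by_cases hj : j.1+1 ∈ iiG
            · rw [if_pos hj, if_pos hj]
              have h1 := hMpow (j.1+1)
              have h2 := hXpow (j.1+1)
              have h3 : 2*(s:ℝ)*(M:ℝ)^(j.1+1) ≤ 2*(s:ℝ)*X^(j.1+1) :=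
                mul_le_mul_of_nonneg_left h1 (by positivity)
              nlinarith
            · rw [if_neg hj, if_neg hj]
      _ = (∏ j : Fin (k-1), (if j.1+1 ∈ iiG then (2*(s:ℝ)+1) else 1))
          * ∏ j : Fin (k-1), (if j.1+1 ∈ iiG then X^(j.1+1) else 1) := by
          rw [← Finset.prod_mul_distrib]
          refine Finset.prod_congr rfl fun j _ => ?_
          by_cases hj : j.1+1 ∈ iiG
          · rw [if_pos hj, if_pos hj, if_pos hj]
          · rw [if_neg hj, if_neg hj, if_neg hj, one_mul]
      _ ≤ (2*(s:ℝ)+1)^k * X ^ (∑ j ∈ Finset.Icc (l + 1) (k - t), ii j) := by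
          have hfirst : (∏ j : Fin (k-1), (if j.1+1 ∈ iiG then (2*(s:ℝ)+1) else 1))
              ≤ (2*(s:ℝ)+1)^k := by
            calc (∏ j : Fin (k-1), (if j.1+1 ∈ iiG then (2*(s:ℝ)+1) else 1))
                ≤ ∏ _j : Fin (k-1), (2*(s:ℝ)+1) := by
                  refine Finset.prod_le_prod (fun j _ => ?_) (fun j _ => ?_)
                  · by_cases hj : j.1+1 ∈ iiG
                    · rw [if_pos hj]; positivity
                    · rw [if_neg hj]; norm_num
                  · by_cases hj : j.1+1 ∈ iiG
                    · rw [if_pos hj]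
                    · rw [if_neg hj]; linarith
              _ = (2*(s:ℝ)+1)^(k-1) := by
                  rw [Finset.prod_const, Finset.card_univ, Fintype.card_fin]
              _ ≤ (2*(s:ℝ)+1)^k := pow_le_pow_right₀ (by linarith) (Nat.sub_le k 1)
          have hsecond : (∏ j : Fin (k-1), (if j.1+1 ∈ iiG then X^(j.1+1) else 1))
              = X ^ (∑ j ∈ Finset.Icc (l + 1) (k - t), ii j) := by
            have hstep : ∀ j : Fin (k-1), (if j.1+1 ∈ iiG then X^(j.1+1) else 1)
                = X^(if j.1+1 ∈ iiG then j.1+1 else 0) := by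
              intro j
              by_cases hj : j.1+1 ∈ iiG
              · rw [if_pos hj, if_pos hj]
              · rw [if_neg hj, if_neg hj, pow_zero]
            rw [Finset.prod_congr rfl (fun j _ => hstep j), Finset.prod_pow_eq_pow_sum]
            congr 1
            rw [← Finset.sum_filter]
            refine (Finset.sum_bij (i := fun (a : ℕ) (ha : a ∈ Finset.Icc (l+1) (k-t)) =>
              (⟨ii a - 1, by
                obtain ⟨h1, h2⟩ := Finset.mem_Icc.mp ha
                have := hiiA a (by omega) h2
                omega⟩ : Fin (k-1))) ?_ ?_ ?_ ?_).symm
            · intro a ha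
              obtain ⟨h1, h2⟩ := Finset.mem_Icc.mp ha
              have hb := hiiA a (by omega) h2
              rw [Finset.mem_filter]
              refine ⟨Finset.mem_univ _, ?_⟩
              have heq : ii a - 1 + 1 = ii a := by omega
              simp only [heq]
              rw [hiiGdef]
              exact Finset.mem_image_of_mem _ ha
            · intro a ha b hb hab
              obtain ⟨ha1, ha2⟩ := Finset.mem_Icc.mp ha
              obtain ⟨hb1, hb2⟩ := Finset.mem_Icc.mp hb
              have hba := hiiA a (by omega) ha2
              have hbb := hiiA b (by omega) hb2
              have hvv : ii a - 1 = ii b - 1 := congrArg Fin.val hab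
              exact hiinj a b (by omega) ha2 (by omega) hb2 (by omega)
            · intro j hj
              rw [Finset.mem_filter] at hj
              have hjG := hj.2
              rw [hiiGdef] at hjG
              obtain ⟨a, ha, hae⟩ := Finset.mem_image.mp hjG
              refine ⟨a, ha, ?_⟩
              apply Fin.ext
              simp only
              omega
            · intro a ha
              obtain ⟨h1, h2⟩ := Finset.mem_Icc.mp ha
              have hb := hiiA a (by omega) h2
              simp only
              omega
          rw [hsecond]
          exact mul_le_mul_of_nonneg_right hfirst (by positivity)
  have hT0 : 0 ≤ T 0 := le_trans (abs_nonneg _) (claimC 0)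
  calc (∫ α in unitCube (t - 1), ‖Fsum kk t X αk α‖ ^ (2 * s))
      = ∑ h ∈ Fintype.piFinset Hj, T h := claimA
    _ ≤ ∑ h ∈ Fintype.piFinset Hj, |T h| := Finset.sum_le_sum fun h _ => le_abs_self _
    _ ≤ ∑ _h ∈ Fintype.piFinset Hj, T 0 := Finset.sum_le_sum fun h _ => claimC h
    _ = ((Fintype.piFinset Hj).card : ℝ) * T 0 := by rw [Finset.sum_const, nsmul_eq_mul]
    _ ≤ ((2*(s:ℝ)+1)^k * X ^ (∑ j ∈ Finset.Icc (l + 1) (k - t), ii j)) * T 0 :=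
        mul_le_mul_of_nonneg_right claimD hT0
    _ = (2*(s:ℝ)+1)^k * X ^ (∑ j ∈ Finset.Icc (l + 1) (k - t), ii j) * Isum s k ii X αk l := by
        rw [claimB]
end

section
/- Let ν ∈ (0,1). For all sufficiently large X (in terms of t and ν), for every H with 1 ≤ H ≤ X^{1−ν}, and for every (α_1, …, α_t) ∈ 𝔪̃_H, one has N(H) ≤ 1; that is, for every γ = (γ_1, …, γ_t) ∈ [0,1)^t there is at most one integer h with 1 ≤ h ≤ H satisfying ‖hα_j − γ_j‖ < (4k)^{−1} X^{−k_j} for every j = 1, …, t. -/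
/-- `‖θ‖`, the distance from `θ` to the nearest integer. -/
noncomputable def nint (θ : ℝ) : ℝ := |θ - round θ|

/-- The major arcs `𝔐̃_H ⊆ [0,1)^t`: the union over `0 ≤ a_1, …, a_t ≤ q ≤ X` with
`gcd(q, a_1, …, a_t) = 1` of the boxes
`{α : |α_i − a_i/q| ≤ t⁻¹ q⁻¹ X^{−k_i+1} H⁻¹ for all i}`.  The `i`-th coordinate
(`i : Fin t`, zero-based) corresponds to the exponent `k_{i+1} = kk (i+1)`. -/
def majorT (t : ℕ) (kk : ℕ → ℕ) (H X : ℝ) : Set (Fin t → ℝ) :=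
  {α | (∀ i, α i ∈ Set.Ico (0 : ℝ) 1) ∧ ∃ q : ℕ, ∃ a : Fin t → ℕ,
      (∀ i, a i ≤ q) ∧ (q : ℝ) ≤ X ∧ Nat.gcd q (Finset.univ.gcd a) = 1 ∧
      ∀ i : Fin t, |α i - (a i : ℝ) / (q : ℝ)| ≤
        (t : ℝ)⁻¹ * (q : ℝ)⁻¹ * X ^ (1 - (kk (i.1 + 1) : ℝ)) * H⁻¹}

lemma nint_le' (x : ℝ) (m : ℤ) : nint x ≤ |x - m| := round_le x m

lemma nint_sub_le (x y : ℝ) : nint (x - y) ≤ nint x + nint y := by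
  calc nint (x - y) ≤ |x - y - ((round x - round y : ℤ) : ℝ)| := nint_le' _ _
    _ = |(x - round x) - (y - round y)| := by push_cast; ring_nf
    _ ≤ |x - round x| + |y - round y| := abs_sub _ _
    _ = nint x + nint y := rfl

theorem statement16 (ν : ℝ) (hν : ν ∈ Set.Ioo (0 : ℝ) 1) (t : ℕ) (ht : 1 ≤ t) :
    ∃ X₀ : ℝ, ∀ (k : ℕ) (kk : ℕ → ℕ), kk 1 = k → 2 ≤ k → t < k → 1 ≤ kk t →
      (∀ a b : ℕ, 1 ≤ a → a < b → b ≤ t → kk b < kk a) →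
      ∀ X : ℝ, X₀ ≤ X →
      ∀ H : ℝ, 1 ≤ H → H ≤ X ^ (1 - ν) →
      ∀ α : Fin t → ℝ,
        α ∈ (Set.univ.pi fun _ : Fin t => Set.Ico (0 : ℝ) 1) \ majorT t kk H X →
      ∀ γ : Fin t → ℝ, (∀ i, γ i ∈ Set.Ico (0 : ℝ) 1) →
      ∀ h₁ h₂ : ℕ,
        (1 ≤ h₁ ∧ (h₁ : ℝ) ≤ H ∧ ∀ j : Fin t,
          nint ((h₁ : ℝ) * α j - γ j) < (4 * (k : ℝ))⁻¹ * X ^ (-(kk (j.1 + 1) : ℝ))) →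
        (1 ≤ h₂ ∧ (h₂ : ℝ) ≤ H ∧ ∀ j : Fin t,
          nint ((h₂ : ℝ) * α j - γ j) < (4 * (k : ℝ))⁻¹ * X ^ (-(kk (j.1 + 1) : ℝ))) →
        h₁ = h₂ := by
  use 1
  intro k kk hkk1 hk2 htk hkkt hdec X hX H hH1 hHX α hα γ hγ h₁ h₂ Hh₁ Hh₂
  have hXpos : (0 : ℝ) < X := lt_of_lt_of_le one_pos hX
  have hHX' : H ≤ X := by
    calc H ≤ X ^ (1 - ν) := hHX
      _ ≤ X ^ (1 : ℝ) := Real.rpow_le_rpow_of_exponent_le hX (by linarith [hν.1])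
      _ = X := Real.rpow_one X
  have hkR : (2 : ℝ) ≤ (k : ℝ) := by exact_mod_cast hk2
  have htR : (1 : ℝ) ≤ (t : ℝ) := by exact_mod_cast ht
  have htkR : (t : ℝ) < (k : ℝ) := by exact_mod_cast htk
  have key : ∀ m n : ℕ,
      (1 ≤ m ∧ (m : ℝ) ≤ H ∧ ∀ j : Fin t,
        nint ((m : ℝ) * α j - γ j) < (4 * (k : ℝ))⁻¹ * X ^ (-(kk (j.1 + 1) : ℝ))) →
      (1 ≤ n ∧ (n : ℝ) ≤ H ∧ ∀ j : Fin t,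
        nint ((n : ℝ) * α j - γ j) < (4 * (k : ℝ))⁻¹ * X ^ (-(kk (j.1 + 1) : ℝ))) →
      n < m → False := by
    intro m n ⟨hm1, hmH, hmj⟩ ⟨hn1, hnH, hnj⟩ hlt
    set h : ℕ := m - n with hh
    have hpos : 0 < h := Nat.sub_pos_of_lt hlt
    have hhR : ((h : ℕ) : ℝ) = (m : ℝ) - (n : ℝ) := by
      rw [hh, Nat.cast_sub hlt.le]
    have hhRpos : (0 : ℝ) < (h : ℝ) := by exact_mod_cast hpos
    have hαj : ∀ j, α j ∈ Set.Ico (0 : ℝ) 1 := fun j => hα.1 j (Set.mem_univ j)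
    -- the small-denominator bound on ‖h α j‖
    have hnint : ∀ j : Fin t,
        nint ((h : ℝ) * α j) < (2 * (k : ℝ))⁻¹ * X ^ (-(kk (j.1 + 1) : ℝ)) := by
      intro j
      have hsub : (h : ℝ) * α j = ((m : ℝ) * α j - γ j) - ((n : ℝ) * α j - γ j) := by
        rw [hhR]; ring
      calc nint ((h : ℝ) * α j)
          ≤ nint ((m : ℝ) * α j - γ j) + nint ((n : ℝ) * α j - γ j) := by
            rw [hsub]; exact nint_sub_le _ _
        _ < (4 * (k : ℝ))⁻¹ * X ^ (-(kk (j.1 + 1) : ℝ))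
            + (4 * (k : ℝ))⁻¹ * X ^ (-(kk (j.1 + 1) : ℝ)) := add_lt_add (hmj j) (hnj j)
        _ = (2 * (k : ℝ))⁻¹ * X ^ (-(kk (j.1 + 1) : ℝ)) := by
            have : (k : ℝ) ≠ 0 := by positivity
            field_simp
            ring
    -- define the approximating integers
    set b : Fin t → ℤ := fun j => round ((h : ℝ) * α j) with hb
    have hbabs : ∀ j, |(h : ℝ) * α j - (b j : ℝ)| = nint ((h : ℝ) * α j) := fun j => rfl
    have hbnonneg : ∀ j, 0 ≤ b j := by
      intro j
      have h1 : |(h : ℝ) * α j - (b j : ℝ)| ≤ 1 / 2 := abs_sub_round _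
      have h2 : (0 : ℝ) ≤ (h : ℝ) * α j := mul_nonneg hhRpos.le (hαj j).1
      have h3 : (-1 : ℝ) < (b j : ℝ) := by
        have := abs_le.mp h1
        linarith [this.2]
      have h4 : (-1 : ℤ) < b j := by exact_mod_cast h3
      omega
    have hble : ∀ j, b j ≤ (h : ℤ) := by
      intro j
      have h1 : |(h : ℝ) * α j - (b j : ℝ)| ≤ 1 / 2 := abs_sub_round _
      have h2 : (h : ℝ) * α j < (h : ℝ) := by
        nlinarith [(hαj j).2, hhRpos]
      have h3 : (b j : ℝ) < (h : ℝ) + 1 := by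
        have := abs_le.mp h1
        linarith [this.1]
      exact_mod_cast Int.lt_add_one_iff.mp (by exact_mod_cast h3)
    set bn : Fin t → ℕ := fun j => (b j).toNat with hbn
    have hbnR : ∀ j, ((bn j : ℕ) : ℝ) = (b j : ℝ) := by
      intro j
      have h5 := Int.toNat_of_nonneg (hbnonneg j)
      exact_mod_cast congrArg (Int.cast : ℤ → ℝ) h5
    have hbnle : ∀ j, bn j ≤ h := by
      intro j
      exact_mod_cast Int.toNat_le.mpr (hble j)
    set d : ℕ := Nat.gcd h (Finset.univ.gcd bn) with hd
    have hdh : d ∣ h := Nat.gcd_dvd_left _ _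
    have hdpos : 0 < d := Nat.gcd_pos_of_pos_left _ hpos
    have hdb : ∀ j, d ∣ bn j := fun j =>
      dvd_trans (Nat.gcd_dvd_right _ _) (Finset.gcd_dvd (Finset.mem_univ j))
    set q : ℕ := h / d with hq
    set a : Fin t → ℕ := fun j => bn j / d with ha
    have hqpos : 0 < q := Nat.div_pos (Nat.le_of_dvd hpos hdh) hdpos
    have hqh : q ≤ h := Nat.div_le_self _ _
    have hqR : ((q : ℕ) : ℝ) = (h : ℝ) / (d : ℝ) := by
      rw [hq]; exact Nat.cast_div hdh (by exact_mod_cast hdpos.ne')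
    have haR : ∀ j, ((a j : ℕ) : ℝ) = (bn j : ℝ) / (d : ℝ) := by
      intro j
      exact Nat.cast_div (hdb j) (by exact_mod_cast hdpos.ne')
    -- coprimality
    have hcop : Nat.gcd q (Finset.univ.gcd a) = 1 := by
      set e : ℕ := Nat.gcd q (Finset.univ.gcd a) with he
      have heq : e ∣ q := Nat.gcd_dvd_left _ _
      have hea : ∀ j, e ∣ a j := fun j =>
        dvd_trans (Nat.gcd_dvd_right _ _) (Finset.gcd_dvd (Finset.mem_univ j))
      have h1 : d * e ∣ h := (Nat.dvd_div_iff_mul_dvd hdh).mp heq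
      have h2 : ∀ j, d * e ∣ bn j := fun j => (Nat.dvd_div_iff_mul_dvd (hdb j)).mp (hea j)
      have h3 : d * e ∣ Finset.univ.gcd bn :=
        Finset.dvd_gcd fun j _ => h2 j
      have h4 : d * e ∣ d := Nat.dvd_gcd h1 h3
      have h5 : d * e ≤ d := Nat.le_of_dvd hdpos h4
      have h6 : e ≤ 1 := by
        by_contra hcon
        push_neg at hcon
        nlinarith
      have h7 : 0 < e := Nat.gcd_pos_of_pos_left _ hqpos
      omega
    -- show α ∈ majorT : contradiction
    apply hα.2
    refine ⟨hαj, q, a, fun j => Nat.div_le_div_right (hbnle j), ?_, hcop, ?_⟩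
    · calc ((q : ℕ) : ℝ) ≤ (h : ℝ) := by exact_mod_cast hqh
        _ ≤ (m : ℝ) := by exact_mod_cast Nat.cast_le.mpr (Nat.sub_le m n)
        _ ≤ H := hmH
        _ ≤ X := hHX'
    · intro j
      have hdR : (0 : ℝ) < (d : ℝ) := by exact_mod_cast hdpos
      have hqRpos : (0 : ℝ) < (q : ℝ) := by exact_mod_cast hqpos
      have hfrac : ((a j : ℕ) : ℝ) / ((q : ℕ) : ℝ) = (b j : ℝ) / (h : ℝ) := by
        rw [haR j, hqR, hbnR j]
        field_simp
      have hHpos : (0 : ℝ) < H := lt_of_lt_of_le one_pos hH1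
      have hediv : α j - (b j : ℝ) / (h : ℝ)
          = ((h : ℝ) * α j - (b j : ℝ)) / (h : ℝ) := by
        field_simp
      have habs : |α j - ((a j : ℕ) : ℝ) / ((q : ℕ) : ℝ)|
          = nint ((h : ℝ) * α j) / (h : ℝ) := by
        rw [hfrac, ← hbabs j, hediv, abs_div, abs_of_pos hhRpos]
      have hqhR : ((q : ℕ) : ℝ) ≤ (h : ℝ) := by exact_mod_cast hqh
      have hinv : (h : ℝ)⁻¹ ≤ ((q : ℕ) : ℝ)⁻¹ := inv_anti₀ hqRpos hqhR
      set P : ℝ := X ^ (-(kk (j.1 + 1) : ℝ)) with hP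
      have hPpos : (0 : ℝ) < P := Real.rpow_pos_of_pos hXpos _
      have hsplit : X ^ (1 - (kk (j.1 + 1) : ℝ)) = X * P := by
        rw [hP, show (1 - (kk (j.1 + 1) : ℝ)) = 1 + (-(kk (j.1 + 1) : ℝ)) by ring,
          Real.rpow_add hXpos, Real.rpow_one]
      have hbase : (2 * (k : ℝ))⁻¹ ≤ (t : ℝ)⁻¹ * X * H⁻¹ := by
        have h1 : (1 : ℝ) / (2 * (k : ℝ)) ≤ X / ((t : ℝ) * H) := by
          rw [div_le_div_iff₀ (by positivity) (by positivity)]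
          have h2 : (t : ℝ) * H ≤ (k : ℝ) * X :=
            mul_le_mul htkR.le hHX' hHpos.le (by linarith)
          have h3 : (0 : ℝ) ≤ (k : ℝ) * X := by positivity
          linarith
        calc (2 * (k : ℝ))⁻¹ = 1 / (2 * (k : ℝ)) := (one_div _).symm
          _ ≤ X / ((t : ℝ) * H) := h1
          _ = (t : ℝ)⁻¹ * X * H⁻¹ := by rw [div_eq_mul_inv, mul_inv]; ring
      have hA : (2 * (k : ℝ))⁻¹ * P ≤ (t : ℝ)⁻¹ * X ^ (1 - (kk (j.1 + 1) : ℝ)) * H⁻¹ := by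
        rw [hsplit]
        calc (2 * (k : ℝ))⁻¹ * P ≤ ((t : ℝ)⁻¹ * X * H⁻¹) * P :=
              mul_le_mul_of_nonneg_right hbase hPpos.le
          _ = (t : ℝ)⁻¹ * (X * P) * H⁻¹ := by ring
      have hRHSnonneg : (0 : ℝ) ≤ (t : ℝ)⁻¹ * X ^ (1 - (kk (j.1 + 1) : ℝ)) * H⁻¹ := by
        have : (0 : ℝ) < X ^ (1 - (kk (j.1 + 1) : ℝ)) := Real.rpow_pos_of_pos hXpos _
        positivity
      rw [habs]
      calc nint ((h : ℝ) * α j) / (h : ℝ)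
          = nint ((h : ℝ) * α j) * (h : ℝ)⁻¹ := div_eq_mul_inv _ _
        _ ≤ ((t : ℝ)⁻¹ * X ^ (1 - (kk (j.1 + 1) : ℝ)) * H⁻¹) * ((q : ℕ) : ℝ)⁻¹ :=
            mul_le_mul ((hnint j).le.trans hA) hinv (inv_nonneg.mpr hhRpos.le) hRHSnonneg
        _ = (t : ℝ)⁻¹ * ((q : ℕ) : ℝ)⁻¹ * X ^ (1 - (kk (j.1 + 1) : ℝ)) * H⁻¹ := by ring
  rcases Nat.lt_trichotomy h₁ h₂ with hlt | heq | hgt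
  · exact absurd (key h₂ h₁ Hh₂ Hh₁ hlt) not_false
  · exact heq
  · exact absurd (key h₁ h₂ Hh₁ Hh₂ hgt) not_false
end
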